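/- Let p be an odd prime, n ≥ 0 an integer, and R = p^{n - 1/(p-1)}. Let g be an isometric ring automorphism of ℂ_p (such g automatically fixes ℚ_p pointwise), let c ∈ ℚ_p with |c| < p^{-n}, and let μ be a bounded distribution on the Tate algebra of radius R over ℂ_p. For f = Σ_k a_k x^k in the Tate algebra write f^g = Σ_k g(a_k) x^k, and let E_c = Σ_k (c^k/k!) x^k, which lies in the Tate algebra of radius R. Define (g·μ)(f) = g(μ(f^{g^{-1}} · E_c)). Then g·μ is a bounded distribution, and its Fourier transform Σ_k ((g·μ)(x^k)/k!) T^k is obtained from the Fourier transform Σ_k (μ(x^k)/k!) T^k of μ by substituting T ↦ T + c and then applying g to all coefficients. (In the paper, c = log_p(χ(g)) for g in the absolute Galois group of ℚ_p(μ_{p^n}) and χ the cyclotomic character; this identity says the Fourier transform intertwines the Galois action on distributions with Colmez's action on B_Sen.) -/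

import Mathlib

open Filter Topology

/-- A coefficient sequence belongs to the Tate algebra of radius `R`:
`‖a k‖ R^k → 0`. -/
def IsTate {K : Type*} [NormedField K] (R : ℝ) (a : ℕ → K) : Prop :=
  Filter.Tendsto (fun k => ‖a k‖ * R ^ k) Filter.atTop (nhds 0)

/-- The (Gauss = sup) norm on the Tate algebra of radius `R`:
`‖∑ a_k x^k‖ = sup_k ‖a_k‖ R^k`. -/
noncomputable def tateNorm {K : Type*} [NormedField K] (R : ℝ) (a : ℕ → K) : ℝ :=
  ⨆ k : ℕ, ‖a k‖ * R ^ k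

/-- A bounded distribution on the Tate algebra of radius `R` over `K`: a `K`-linear
functional on the Tate algebra (identified with its coefficient sequences) that is
bounded with respect to the Gauss norm. -/
structure BDist (K : Type*) [NormedField K] (R : ℝ) where
  toFun : {a : ℕ → K // IsTate R a} → K
  map_add' : ∀ a b c : {a : ℕ → K // IsTate R a},
    (c : ℕ → K) = (a : ℕ → K) + (b : ℕ → K) → toFun c = toFun a + toFun b
  map_smul' : ∀ (r : K) (a b : {a : ℕ → K // IsTate R a}),
    (b : ℕ → K) = r • (a : ℕ → K) → toFun b = r * toFun a
  bound' : ∃ C : ℝ, ∀ a : {a : ℕ → K // IsTate R a}, ‖toFun a‖ ≤ C * tateNorm R (a : ℕ → K)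

/-- The monomial `x^k` as an element of the Tate algebra of radius `R`. -/
noncomputable def tateMono {K : Type*} [NormedField K] (R : ℝ) (k : ℕ) :
    {a : ℕ → K // IsTate R a} :=
  ⟨fun j => if j = k then 1 else 0, by
    apply Filter.Tendsto.congr' _ tendsto_const_nhds
    filter_upwards [Filter.eventually_ge_atTop (k + 1)] with j hj
    have hjk : j ≠ k := by omega
    simp [hjk]⟩

/-- The Cauchy product of two coefficient sequences (i.e. the coefficients of the
product of the corresponding power series). -/
noncomputable def seqMul {K : Type*} [NormedField K] (a b : ℕ → K) : ℕ → K :=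
  fun k => ∑ m ∈ Finset.range (k + 1), a m * b (k - m)

section Aux
variable {K : Type*} [NormedField K] {R : ℝ}

lemma ultra_of_hna (hna : ∀ x y : K, ‖x + y‖ ≤ max ‖x‖ ‖y‖) : IsUltrametricDist K :=
  ⟨fun x y z => by simpa [dist_eq_norm, sub_add_sub_cancel] using hna (x - y) (y - z)⟩

lemma tate_bddAbove {a : ℕ → K} (ha : IsTate R a) :
    BddAbove (Set.range fun k => ‖a k‖ * R ^ k) :=
  ha.bddAbove_range

lemma le_tateNorm {a : ℕ → K} (ha : IsTate R a) (k : ℕ) :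
    ‖a k‖ * R ^ k ≤ tateNorm R a :=
  le_ciSup (tate_bddAbove ha) k

lemma tateNorm_nonneg (hR : 0 < R) {a : ℕ → K} (ha : IsTate R a) : 0 ≤ tateNorm R a :=
  le_trans (by positivity) (le_tateNorm ha 0)

lemma isTate_zero : IsTate R (fun _ => (0 : K)) := by
  unfold IsTate
  simpa using (tendsto_const_nhds : Tendsto (fun _ : ℕ => (0:ℝ)) atTop (𝓝 0))

lemma isTate_add (hR : 0 < R) {a b : ℕ → K} (ha : IsTate R a) (hb : IsTate R b) :
    IsTate R (fun k => a k + b k) := by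
  refine squeeze_zero (g := fun k => ‖a k‖ * R ^ k + ‖b k‖ * R ^ k)
    (fun k => by positivity) (fun k => ?_) (by simpa using ha.add hb)
  calc ‖a k + b k‖ * R ^ k ≤ (‖a k‖ + ‖b k‖) * R ^ k :=
        mul_le_mul_of_nonneg_right (norm_add_le _ _) (by positivity)
    _ = ‖a k‖ * R ^ k + ‖b k‖ * R ^ k := by ring

lemma isTate_smul (r : K) {a : ℕ → K} (ha : IsTate R a) :
    IsTate R (fun k => r * a k) := by
  have : (fun k => ‖r * a k‖ * R ^ k) = fun k => ‖r‖ * (‖a k‖ * R ^ k) := by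
    funext k; rw [norm_mul]; ring
  unfold IsTate
  rw [this]
  simpa using ha.const_mul ‖r‖

lemma isTate_sub (hR : 0 < R) {a b : ℕ → K} (ha : IsTate R a) (hb : IsTate R b) :
    IsTate R (fun k => a k - b k) := by
  have := isTate_add hR ha (isTate_smul (-1 : K) hb)
  simpa [sub_eq_add_neg] using this

lemma seqMul_term_bound (hR : 0 < R) {a b : ℕ → K} (ha : IsTate R a) (hb : IsTate R b)
    {k m : ℕ} (hm : m ≤ k) :
    ‖a m * b (k - m)‖ * R ^ k ≤ tateNorm R a * tateNorm R b := by
  have hpow : R ^ k = R ^ m * R ^ (k - m) := by rw [← pow_add]; congr 1; omega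
  calc ‖a m * b (k - m)‖ * R ^ k = (‖a m‖ * R ^ m) * (‖b (k - m)‖ * R ^ (k - m)) := by
        rw [norm_mul, hpow]; ring
    _ ≤ tateNorm R a * tateNorm R b := by
        apply mul_le_mul (le_tateNorm ha m) (le_tateNorm hb _) (by positivity)
          (tateNorm_nonneg hR ha)

lemma seqMul_bound (hna : ∀ x y : K, ‖x + y‖ ≤ max ‖x‖ ‖y‖) (hR : 0 < R)
    {a b : ℕ → K} (ha : IsTate R a) (hb : IsTate R b) (k : ℕ) :
    ‖seqMul a b k‖ * R ^ k ≤ tateNorm R a * tateNorm R b := by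
  haveI := ultra_of_hna hna
  have hRk : (0:ℝ) < R ^ k := by positivity
  rw [← le_div_iff₀ hRk] at *
  refine IsUltrametricDist.norm_sum_le_of_forall_le_of_nonneg ?_ ?_
  · have := mul_nonneg (tateNorm_nonneg hR ha) (tateNorm_nonneg hR hb); positivity
  · intro m hm
    rw [Finset.mem_range] at hm
    rw [le_div_iff₀ hRk]
    exact seqMul_term_bound hR ha hb (by omega)

lemma isTate_seqMul (hna : ∀ x y : K, ‖x + y‖ ≤ max ‖x‖ ‖y‖) (hR : 0 < R)
    {a b : ℕ → K} (ha : IsTate R a) (hb : IsTate R b) :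
    IsTate R (seqMul a b) := by
  haveI := ultra_of_hna hna
  rw [IsTate, Metric.tendsto_atTop]
  intro ε hε
  set T := max (max (tateNorm R a) (tateNorm R b)) 1 with hT
  have hT1 : (1:ℝ) ≤ T := le_max_right _ _
  have hT0 : (0:ℝ) < T := lt_of_lt_of_le one_pos hT1
  have hTa : tateNorm R a ≤ T := le_trans (le_max_left _ _) (le_max_left _ _)
  have hTb : tateNorm R b ≤ T := le_trans (le_max_right _ _) (le_max_left _ _)
  have hε' : 0 < ε / (2 * T) := by positivity
  obtain ⟨N₁, hN₁⟩ := (Metric.tendsto_atTop.mp ha) _ hε'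
  obtain ⟨N₂, hN₂⟩ := (Metric.tendsto_atTop.mp hb) _ hε'
  refine ⟨N₁ + N₂, fun k hk => ?_⟩
  have hterm : ∀ m ∈ Finset.range (k + 1), ‖a m * b (k - m)‖ ≤ (ε / 2) / R ^ k := by
    intro m hm
    rw [Finset.mem_range] at hm
    have hmk : m ≤ k := by omega
    have hRk : (0:ℝ) < R ^ k := by positivity
    rw [le_div_iff₀ hRk]
    have hpow : R ^ k = R ^ m * R ^ (k - m) := by rw [← pow_add]; congr 1; omega
    have hsplit : ‖a m * b (k - m)‖ * R ^ k
        = (‖a m‖ * R ^ m) * (‖b (k - m)‖ * R ^ (k - m)) := by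
      rw [norm_mul, hpow]; ring
    rw [hsplit]
    rcases le_or_gt N₁ m with h1 | h1
    · have := hN₁ m h1
      rw [Real.dist_eq, sub_zero, abs_of_nonneg (by positivity)] at this
      calc (‖a m‖ * R ^ m) * (‖b (k - m)‖ * R ^ (k - m))
          ≤ (ε / (2 * T)) * T :=
            mul_le_mul this.le (le_trans (le_tateNorm hb _) hTb) (by positivity) (by positivity)
        _ = ε / 2 := by field_simp
    · have h2 : N₂ ≤ k - m := by omega
      have := hN₂ _ h2
      rw [Real.dist_eq, sub_zero, abs_of_nonneg (by positivity)] at this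
      calc (‖a m‖ * R ^ m) * (‖b (k - m)‖ * R ^ (k - m))
          ≤ T * (ε / (2 * T)) :=
            mul_le_mul (le_trans (le_tateNorm ha _) hTa) this.le (by positivity) hT0.le
        _ = ε / 2 := by field_simp
  have hsum : ‖seqMul a b k‖ ≤ (ε / 2) / R ^ k :=
    IsUltrametricDist.norm_sum_le_of_forall_le_of_nonneg (by positivity) hterm
  have hRk : (0:ℝ) < R ^ k := by positivity
  rw [Real.dist_eq, sub_zero, abs_of_nonneg (by positivity)]
  calc ‖seqMul a b k‖ * R ^ k ≤ ((ε / 2) / R ^ k) * R ^ k :=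
        mul_le_mul_of_nonneg_right hsum hRk.le
    _ = ε / 2 := by field_simp
    _ < ε := by linarith

lemma tateNorm_mono_le (hR : 0 < R) (m : ℕ) :
    tateNorm R (((tateMono R m : {a : ℕ → K // IsTate R a}) : ℕ → K)) ≤ R ^ m := by
  refine ciSup_le fun i => ?_
  by_cases h : i = m
  · subst h; simp [tateMono]
  · simp [tateMono, h]
    positivity

lemma isTate_partialsum (hR : 0 < R) (t : ℕ → K) (m : ℕ → ℕ) (N : ℕ) :
    IsTate R (fun i => ∑ k ∈ Finset.range N,
      t k * ((tateMono R (m k) : {a : ℕ → K // IsTate R a}) : ℕ → K) i) := by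
  induction N with
  | zero => simpa using (isTate_zero (K := K) (R := R))
  | succ N ih =>
      simp only [Finset.sum_range_succ]
      exact isTate_add hR ih (isTate_smul _ (tateMono R (m N)).2)

lemma BDist.map_finsum (hR : 0 < R) (μ : BDist K R) (t : ℕ → K) (m : ℕ → ℕ) (N : ℕ)
    (h : IsTate R (fun i => ∑ k ∈ Finset.range N,
      t k * ((tateMono R (m k) : {a : ℕ → K // IsTate R a}) : ℕ → K) i)) :
    μ.toFun ⟨_, h⟩ = ∑ k ∈ Finset.range N, t k * μ.toFun (tateMono R (m k)) := by
  induction N with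
  | zero =>
      rw [μ.map_smul' 0 (tateMono R 0) ⟨_, h⟩ (by funext i; simp)]
      simp
  | succ N ih =>
      have hS := isTate_partialsum hR t m N
      have hmono : IsTate R (fun i =>
          t N * ((tateMono R (m N) : {a : ℕ → K // IsTate R a}) : ℕ → K) i) :=
        isTate_smul _ (tateMono R (m N)).2
      rw [μ.map_add' ⟨_, hS⟩ ⟨_, hmono⟩ ⟨_, h⟩
        (by funext i; simp [Finset.sum_range_succ]),
        ih hS,
        μ.map_smul' (t N) (tateMono R (m N)) ⟨_, hmono⟩ (by funext i; simp),
        Finset.sum_range_succ]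

end Aux

lemma Ec_isTate (p : ℕ) [hp : Fact p.Prime] {K : Type*} [NormedField K] [Algebra ℚ_[p] K]
    (hnorm : ∀ x : ℚ_[p], ‖(algebraMap ℚ_[p] K) x‖ = ‖x‖)
    (n : ℕ) {R : ℝ} (hR : R = (p : ℝ) ^ ((n : ℝ) - 1 / ((p : ℝ) - 1)))
    {c : ℚ_[p]} (hc : ‖c‖ < (p : ℝ) ^ (-(n : ℝ))) :
    IsTate R (fun k : ℕ => (algebraMap ℚ_[p] K c) ^ k / (k.factorial : K)) := by
  have hp1 : (1:ℝ) < (p:ℝ) := by exact_mod_cast hp.out.one_lt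
  have hp0 : (0:ℝ) < (p:ℝ) := lt_trans one_pos hp1
  have hRpos : 0 < R := by rw [hR]; positivity
  have hc' : ‖c‖ ≤ (p:ℝ) ^ (-((n:ℤ) + 1)) := by
    rcases eq_or_ne c 0 with rfl | h
    · simp only [norm_zero]; positivity
    · have hzc : (p:ℝ) ^ (-(n : ℝ)) = (p:ℝ) ^ (-(n:ℤ)) := by
        rw [← Real.rpow_intCast]; push_cast; ring_nf
      rw [Padic.norm_eq_zpow_neg_valuation h, hzc] at hc
      rw [Padic.norm_eq_zpow_neg_valuation h]
      have hlt : -c.valuation < -(n:ℤ) := (zpow_lt_zpow_iff_right₀ hp1).mp hc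
      have : -c.valuation ≤ -((n:ℤ) + 1) := by omega
      exact zpow_le_zpow_right₀ hp1.le this
  have key : ∀ k : ℕ, ‖(algebraMap ℚ_[p] K c) ^ k / (k.factorial : K)‖ * R ^ k
      ≤ ((p:ℝ)⁻¹) ^ k := by
    intro k
    set v : ℕ := padicValNat p k.factorial with hv
    have hkf : ((k.factorial : ℚ_[p])) ≠ 0 := by
      exact_mod_cast k.factorial_ne_zero
    have hnf : ‖(k.factorial : K)‖ = (p:ℝ) ^ (-(v:ℤ)) := by
      rw [show ((k.factorial : K)) = algebraMap ℚ_[p] K (k.factorial : ℚ_[p]) by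
        rw [map_natCast], hnorm, Padic.norm_eq_zpow_neg_valuation hkf, Padic.valuation_natCast]
    have hnc : ‖algebraMap ℚ_[p] K c‖ = ‖c‖ := hnorm c
    rw [norm_div, norm_pow, hnc, hnf]
    have hvk : ((p:ℕ) - 1) * v ≤ k := by
      rw [hv, sub_one_mul_padicValNat_factorial]
      exact Nat.sub_le _ _
    have hvr : (v:ℝ) ≤ (k:ℝ) / ((p:ℝ) - 1) := by
      rw [le_div_iff₀ (by linarith)]
      have : (((p:ℕ) - 1 : ℕ) : ℝ) * (v:ℝ) ≤ (k:ℝ) := by exact_mod_cast hvk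
      rw [Nat.cast_sub hp.out.one_le] at this
      push_cast at this
      linarith [this]
    have hb1 : ‖c‖ ^ k ≤ ((p:ℝ) ^ (-((n:ℤ) + 1))) ^ k :=
      pow_le_pow_left₀ (norm_nonneg c) hc' k
    have hstep : ‖c‖ ^ k / (p:ℝ) ^ (-(v:ℤ)) * R ^ k
        ≤ ((p:ℝ) ^ (-((n:ℤ) + 1))) ^ k * (p:ℝ) ^ (v:ℤ) * R ^ k := by
      rw [div_eq_mul_inv, ← zpow_neg, neg_neg]
      have h2 : (0:ℝ) ≤ (p:ℝ) ^ (v:ℤ) := by positivity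
      have h3 : (0:ℝ) ≤ R ^ k := by positivity
      exact mul_le_mul_of_nonneg_right (mul_le_mul_of_nonneg_right hb1 h2) h3
    refine le_trans hstep ?_
    have e1 : ((p:ℝ) ^ (-((n:ℤ) + 1))) ^ k = (p:ℝ) ^ ((-((n:ℝ) + 1)) * k) := by
      rw [← Real.rpow_intCast (p:ℝ) (-((n:ℤ)+1)), ← Real.rpow_natCast _ k,
        ← Real.rpow_mul hp0.le]
      push_cast; ring_nf
    have e2 : (p:ℝ) ^ (v:ℤ) = (p:ℝ) ^ ((v:ℕ):ℝ) := by
      rw [← Real.rpow_intCast (p:ℝ) (v:ℤ)]; push_cast; ring_nf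
    have e3 : R ^ k = (p:ℝ) ^ (((n:ℝ) - 1 / ((p:ℝ) - 1)) * k) := by
      rw [hR, ← Real.rpow_natCast _ k, ← Real.rpow_mul hp0.le]
    have e4 : ((p:ℝ)⁻¹) ^ k = (p:ℝ) ^ (-(k:ℝ)) := by
      rw [inv_pow, Real.rpow_neg hp0.le, ← Real.rpow_natCast (p:ℝ) k]
    rw [e1, e2, e3, e4, ← Real.rpow_add hp0, ← Real.rpow_add hp0]
    rw [Real.rpow_le_rpow_left_iff hp1]
    have hd : (k:ℝ) / ((p:ℝ) - 1) = 1 / ((p:ℝ) - 1) * k := by ring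
    rw [hd] at hvr
    nlinarith [hvr]
  refine squeeze_zero (fun k => by positivity) key ?_
  exact tendsto_pow_atTop_nhds_zero_of_lt_one (by positivity)
    (inv_lt_one_of_one_lt₀ hp1)

/-- Galois action on distributions versus Colmez's action on `B_Sen`.  Let `g` be an
isometric ring automorphism of `K` (`K` playing the role of `ℂ_p`), let `c ∈ ℚ_p`
with `|c| < p^{-n}`, and let `μ` be a bounded distribution on the Tate algebra of
radius `R = p^{n-1/(p-1)}`.  Then `E_c = ∑ (c^k/k!) x^k` lies in the Tate algebra,
as does `f^{g^{-1}} · E_c` for any `f` in it; the functional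
`(g·μ)(f) = g(μ(f^{g^{-1}} · E_c))` is again a bounded distribution; and the
Fourier transform of `g·μ` is obtained from that of `μ` by substituting
`T ↦ T + c` and applying `g` to all coefficients:
`(F(g·μ))_j = g(∑_{k} F(μ)_{j+k} · ((j+k) choose j) · c^k)`. -/
theorem statement17 (p : ℕ) [Fact p.Prime] (hodd : Odd p)
    {K : Type*} [NormedField K] [CompleteSpace K] [IsAlgClosed K] [Algebra ℚ_[p] K]
    [CharZero K]
    (hnorm : ∀ x : ℚ_[p], ‖(algebraMap ℚ_[p] K) x‖ = ‖x‖)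
    (hna : ∀ x y : K, ‖x + y‖ ≤ max ‖x‖ ‖y‖)
    (n : ℕ) (R : ℝ) (hR : R = (p : ℝ) ^ ((n : ℝ) - 1 / ((p : ℝ) - 1)))
    (g : K ≃+* K) (hg : ∀ x : K, ‖g x‖ = ‖x‖)
    (c : ℚ_[p]) (hc : ‖c‖ < (p : ℝ) ^ (-(n : ℝ)))
    (μ : BDist K R) :
    IsTate R (fun k : ℕ => (algebraMap ℚ_[p] K c) ^ k / (k.factorial : K)) ∧
    (∀ a : ℕ → K, IsTate R a →
        IsTate R (seqMul (fun k => g.symm (a k))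
          (fun k => (algebraMap ℚ_[p] K c) ^ k / (k.factorial : K)))) ∧
    ∃ gμ : BDist K R,
      (∀ (a : {a : ℕ → K // IsTate R a})
          (h : IsTate R (seqMul (fun k => g.symm ((a : ℕ → K) k))
            (fun k => (algebraMap ℚ_[p] K c) ^ k / (k.factorial : K)))),
          gμ.toFun a = g (μ.toFun ⟨seqMul (fun k => g.symm ((a : ℕ → K) k))
            (fun k => (algebraMap ℚ_[p] K c) ^ k / (k.factorial : K)), h⟩)) ∧
      (∀ j : ℕ, gμ.toFun (tateMono R j) / (j.factorial : K) =
          g (∑' k : ℕ, μ.toFun (tateMono R (j + k)) / ((j + k).factorial : K) *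
            (((j + k).choose j : ℕ) : K) * (algebraMap ℚ_[p] K c) ^ k)) := by
  have hp1 : (1:ℝ) < (p:ℝ) := by exact_mod_cast (Fact.out : p.Prime).one_lt
  have hRpos : 0 < R := by rw [hR]; positivity
  haveI := ultra_of_hna hna
  set cK : K := algebraMap ℚ_[p] K c with hcK
  set C : ℕ → K := fun k => cK ^ k / (k.factorial : K) with hCdef
  have hC : IsTate R C := Ec_isTate p hnorm n hR hc
  have hg' : ∀ x : K, ‖g.symm x‖ = ‖x‖ := fun x => by
    rw [← hg (g.symm x), g.apply_symm_apply]
  have hTg : ∀ a : ℕ → K, IsTate R a → IsTate R (fun k => g.symm (a k)) := by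
    intro a ha
    unfold IsTate at ha ⊢
    simpa [hg'] using ha
  have part2 : ∀ a : ℕ → K, IsTate R a → IsTate R (seqMul (fun k => g.symm (a k)) C) :=
    fun a ha => isTate_seqMul hna hRpos (hTg a ha) hC
  refine ⟨hC, part2, ?_⟩
  obtain ⟨Cb, hCb⟩ := μ.bound'
  set Cb' : ℝ := max Cb 1 with hCb'def
  have hCb'pos : 0 < Cb' := lt_of_lt_of_le one_pos (le_max_right _ _)
  have hCb2 : ∀ a : {a : ℕ → K // IsTate R a},
      ‖μ.toFun a‖ ≤ Cb' * tateNorm R (a : ℕ → K) := fun a =>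
    le_trans (hCb a)
      (mul_le_mul_of_nonneg_right (le_max_left _ _) (tateNorm_nonneg hRpos a.2))
  refine ⟨{
    toFun := fun a => g (μ.toFun ⟨seqMul (fun k => g.symm ((a : ℕ → K) k)) C, part2 a.1 a.2⟩)
    map_add' := by
      intro a b d hd
      have hsplit : seqMul (fun k => g.symm (d.1 k)) C
          = (fun i => seqMul (fun k => g.symm (a.1 k)) C i
              + seqMul (fun k => g.symm (b.1 k)) C i) := by
        funext i
        simp only [seqMul, ← Finset.sum_add_distrib]
        refine Finset.sum_congr rfl fun m _ => ?_
        have hdm : d.1 m = a.1 m + b.1 m := by rw [hd]; rfl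
        rw [hdm, map_add, add_mul]
      rw [show μ.toFun ⟨seqMul (fun k => g.symm (d.1 k)) C, part2 d.1 d.2⟩
            = μ.toFun ⟨_, part2 a.1 a.2⟩ + μ.toFun ⟨_, part2 b.1 b.2⟩ from
          μ.map_add' ⟨_, part2 a.1 a.2⟩ ⟨_, part2 b.1 b.2⟩ _ (by exact hsplit),
        map_add]
    map_smul' := by
      intro r a b hb
      have hsplit : seqMul (fun k => g.symm (b.1 k)) C
          = g.symm r • seqMul (fun k => g.symm (a.1 k)) C := by
        funext i
        simp only [seqMul, Pi.smul_apply, smul_eq_mul, Finset.mul_sum]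
        refine Finset.sum_congr rfl fun m _ => ?_
        have hbm : b.1 m = r * a.1 m := by rw [hb]; rfl
        rw [hbm, map_mul]; ring
      rw [μ.map_smul' (g.symm r) ⟨_, part2 a.1 a.2⟩ ⟨_, part2 b.1 b.2⟩ hsplit,
        map_mul, g.apply_symm_apply]
    bound' := by
      refine ⟨Cb' * tateNorm R C, fun a => ?_⟩
      rw [hg]
      refine le_trans (hCb2 _) ?_
      have h1 : tateNorm R (seqMul (fun k => g.symm (a.1 k)) C)
          ≤ tateNorm R (fun k => g.symm (a.1 k)) * tateNorm R C :=
        ciSup_le (seqMul_bound hna hRpos (hTg a.1 a.2) hC)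
      have h2 : tateNorm R (fun k => g.symm (a.1 k)) = tateNorm R a.1 := by
        unfold tateNorm; simp [hg']
      rw [h2] at h1
      calc Cb' * tateNorm R (seqMul (fun k => g.symm (a.1 k)) C)
          ≤ Cb' * (tateNorm R a.1 * tateNorm R C) :=
            mul_le_mul_of_nonneg_left h1 hCb'pos.le
        _ = Cb' * tateNorm R C * tateNorm R a.1 := by ring }, fun a h => rfl, ?_⟩
  -- Fourier transform identity
  intro j
  have hδ : (fun k => g.symm (((tateMono R j : {a : ℕ → K // IsTate R a}) : ℕ → K) k))
      = ((tateMono R j : {a : ℕ → K // IsTate R a}) : ℕ → K) := by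
    funext k
    by_cases hkj : k = j <;> simp [tateMono, hkj]
  set f : ℕ → K := seqMul ((tateMono R j : {a : ℕ → K // IsTate R a}) : ℕ → K) C with hfdef
  have hf : IsTate R f := isTate_seqMul hna hRpos (tateMono R j).2 hC
  have hLHS : (⟨seqMul (fun k =>
        g.symm (((tateMono R j : {a : ℕ → K // IsTate R a}) : ℕ → K) k)) C,
        part2 _ (tateMono R j).2⟩ : {a : ℕ → K // IsTate R a}) = ⟨f, hf⟩ := by
    apply Subtype.ext
    show seqMul (fun k =>
      g.symm (((tateMono R j : {a : ℕ → K // IsTate R a}) : ℕ → K) k)) C = f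
    rw [hδ]
  show g (μ.toFun ⟨seqMul (fun k =>
      g.symm (((tateMono R j : {a : ℕ → K // IsTate R a}) : ℕ → K) k)) C,
      part2 _ (tateMono R j).2⟩) / (j.factorial : K)
    = g (∑' k : ℕ, μ.toFun (tateMono R (j + k)) / ((j + k).factorial : K) *
        (((j + k).choose j : ℕ) : K) * cK ^ k)
  rw [hLHS]
  set t : ℕ → K := fun k => C k * μ.toFun (tateMono R (j + k)) with ht
  -- value of f
  have hfval : ∀ i, f i = if j ≤ i then C (i - j) else 0 := by
    intro i
    simp only [hfdef, seqMul, tateMono, ite_mul, one_mul, zero_mul]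
    rw [Finset.sum_ite_eq' (Finset.range (i+1)) j (fun m => C (i - m))]
    simp [Nat.lt_succ_iff]
  -- remainder formula
  have hd : ∀ N i, f i - (∑ k ∈ Finset.range N,
      C k * ((tateMono R (j + k) : {a : ℕ → K // IsTate R a}) : ℕ → K) i)
      = if j + N ≤ i then C (i - j) else 0 := by
    intro N i
    by_cases hji : j ≤ i
    · by_cases hiN : i - j < N
      · rw [Finset.sum_eq_single_of_mem (i - j) (Finset.mem_range.mpr hiN) ?_]
        · rw [hfval i, if_pos hji, if_neg (by omega)]
          simp only [tateMono]
          rw [if_pos (by omega : i = j + (i - j)), mul_one, sub_self]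
        · intro k _ hk
          simp only [tateMono]
          rw [if_neg (by omega : ¬ i = j + k), mul_zero]
      · rw [Finset.sum_eq_zero ?_, hfval i, if_pos hji, if_pos (by omega), sub_zero]
        intro k hk
        rw [Finset.mem_range] at hk
        simp only [tateMono]
        rw [if_neg (by omega : ¬ i = j + k), mul_zero]
    · rw [Finset.sum_eq_zero ?_, hfval i, if_neg hji, if_neg (by omega), sub_zero]
      intro k _
      simp only [tateMono]
      rw [if_neg (by omega : ¬ i = j + k), mul_zero]
  -- partial sums converge to μ f
  have hA : Tendsto (fun N => ∑ k ∈ Finset.range N, t k) atTop (𝓝 (μ.toFun ⟨f, hf⟩)) := by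
    rw [Metric.tendsto_atTop]
    intro ε hε
    have hRj : (0:ℝ) < R ^ j := by positivity
    set ε' : ℝ := ε / (2 * Cb' * R ^ j) with hε'def
    have hε'pos : 0 < ε' := by positivity
    obtain ⟨N₀, hN₀⟩ := Metric.tendsto_atTop.mp hC ε' hε'pos
    refine ⟨N₀, fun N hN => ?_⟩
    have hS := isTate_partialsum (K := K) hRpos C (fun k => j + k) N
    have hdN : IsTate R (fun i => f i - (∑ k ∈ Finset.range N,
        C k * ((tateMono R (j + k) : {a : ℕ → K // IsTate R a}) : ℕ → K) i)) :=
      isTate_sub hRpos hf hS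
    have hsplitμ : μ.toFun ⟨f, hf⟩ = μ.toFun ⟨_, hS⟩ + μ.toFun ⟨_, hdN⟩ :=
      μ.map_add' ⟨_, hS⟩ ⟨_, hdN⟩ ⟨f, hf⟩ (by funext i; simp)
    have hrem : ‖μ.toFun ⟨_, hdN⟩‖ ≤ Cb' * (ε' * R ^ j) := by
      refine le_trans (hCb2 _) (mul_le_mul_of_nonneg_left ?_ hCb'pos.le)
      refine ciSup_le fun i => ?_
      dsimp only
      rw [hd N i]
      by_cases hi : j + N ≤ i
      · rw [if_pos hi]
        have hlt : ‖C (i - j)‖ * R ^ (i - j) < ε' := by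
          have := hN₀ (i - j) (by omega)
          rwa [Real.dist_eq, sub_zero, abs_of_nonneg (by positivity)] at this
        have hpow : R ^ i = R ^ (i - j) * R ^ j := by rw [← pow_add]; congr 1; omega
        calc ‖C (i - j)‖ * R ^ i = (‖C (i - j)‖ * R ^ (i - j)) * R ^ j := by
              rw [hpow]; ring
          _ ≤ ε' * R ^ j := mul_le_mul_of_nonneg_right hlt.le hRj.le
      · rw [if_neg hi]
        simp only [norm_zero, zero_mul]
        positivity
    have hμS : μ.toFun ⟨_, hS⟩ = ∑ k ∈ Finset.range N, t k := by
      exact BDist.map_finsum hRpos μ C (fun k => j + k) N hS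
    rw [dist_eq_norm]
    have : (∑ k ∈ Finset.range N, t k) - μ.toFun ⟨f, hf⟩ = -(μ.toFun ⟨_, hdN⟩) := by
      rw [hsplitμ, hμS]; ring
    rw [this, norm_neg]
    calc ‖μ.toFun ⟨_, hdN⟩‖ ≤ Cb' * (ε' * R ^ j) := hrem
      _ = ε / 2 := by rw [hε'def]; field_simp
      _ < ε := by linarith
  -- summability
  have ht0 : Tendsto t atTop (𝓝 0) := by
    refine squeeze_zero_norm (a := fun k => Cb' * R ^ j * (‖C k‖ * R ^ k)) ?_ ?_
    · intro k
      have h1 : ‖μ.toFun (tateMono R (j + k))‖ ≤ Cb' * R ^ (j + k) :=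
        le_trans (hCb2 _) (mul_le_mul_of_nonneg_left (tateNorm_mono_le hRpos _) hCb'pos.le)
      calc ‖t k‖ = ‖C k‖ * ‖μ.toFun (tateMono R (j + k))‖ := by rw [ht, norm_mul]
        _ ≤ ‖C k‖ * (Cb' * R ^ (j + k)) :=
            mul_le_mul_of_nonneg_left h1 (norm_nonneg _)
        _ = Cb' * R ^ j * (‖C k‖ * R ^ k) := by rw [pow_add]; ring
    · simpa using (hC.const_mul (Cb' * R ^ j))
  have hsummable : Summable t :=
    NonarchimedeanAddGroup.summable_of_tendsto_cofinite_zero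
      (by rwa [Nat.cofinite_eq_atTop])
  have htsum : μ.toFun ⟨f, hf⟩ = ∑' k, t k :=
    tendsto_nhds_unique hA hsummable.hasSum.tendsto_sum_nat
  rw [htsum]
  -- term identity
  have hterm : ∀ k : ℕ, μ.toFun (tateMono R (j + k)) / ((j + k).factorial : K) *
      (((j + k).choose j : ℕ) : K) * cK ^ k = t k * ((j.factorial : K))⁻¹ := by
    intro k
    have hfact : ((j + k).choose j * j.factorial * k.factorial : ℕ) = (j + k).factorial := by
      have := Nat.choose_mul_factorial_mul_factorial (Nat.le_add_right j k)
      simpa using this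
    have h1 : ((j.factorial : K)) ≠ 0 := Nat.cast_ne_zero.mpr j.factorial_ne_zero
    have h2 : (((j + k).factorial : K)) ≠ 0 := Nat.cast_ne_zero.mpr (j + k).factorial_ne_zero
    have h3 : ((k.factorial : K)) ≠ 0 := Nat.cast_ne_zero.mpr k.factorial_ne_zero
    have hfactK : (((j + k).choose j : ℕ) : K) * (j.factorial : K) * (k.factorial : K)
        = ((j + k).factorial : K) := by exact_mod_cast congrArg (Nat.cast : ℕ → K) hfact
    rw [ht]
    simp only [hCdef]
    field_simp
    linear_combination μ.toFun (tateMono R (j + k)) * cK ^ k * hfactK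
  have hsum2 : (∑' k : ℕ, μ.toFun (tateMono R (j + k)) / ((j + k).factorial : K) *
      (((j + k).choose j : ℕ) : K) * cK ^ k) = (∑' k, t k) * ((j.factorial : K))⁻¹ := by
    rw [tsum_congr hterm, tsum_mul_right]
  rw [hsum2, map_mul, map_inv₀, map_natCast, div_eq_mul_inv]
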